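/- Let (X,d) be a separable bounded metric space, {x_k}_{k=1}^∞ a countable dense subset, c > diam(X), and φ : X → Dgm_∞ the Bubenik–Wagner isometric embedding φ(x) = {(2c(k−1), 2ck + d(x,x_k))}_{k=1}^∞ into the space of persistence diagrams with the bottleneck distance w_∞. If x ∈ X is an accumulation point, then reach(φ(x), φ(X) ⊆ Dgm_∞) = 0. In particular, if X is not discrete, reach(φ(X) ⊆ Dgm_∞) = 0. Moreover, for any x ≠ y in X the diagram P = {(2c(k−1), 2ck + (d(x,x_k)+d(y,x_k))/2)}_{k=1}^∞ satisfies w_∞(φ(x), P) = w_∞(φ(y), P) = d(x,y)/2 and w_∞(φ(z), P) ≥ d(x,y)/2 for all z ∈ X, so P has at least two nearest points in φ(X). -/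

import Mathlib

open MeasureTheory ENNReal Set

noncomputable section

/-- Distance from a point to a set, with respect to a distance function `ρ`. -/
def distToSet {Y : Type*} (ρ : Y → Y → ℝ≥0∞) (y : Y) (A : Set Y) : ℝ≥0∞ :=
  ⨅ a ∈ A, ρ y a

/-- `y` has a unique (up to distance zero, i.e. unique in the metric quotient) metric
projection onto `A`, for the pseudo-distance `ρ`. -/
def HasUniqueProjMod {Y : Type*} (ρ : Y → Y → ℝ≥0∞) (A : Set Y) (y : Y) : Prop :=
  ∃ a, (a ∈ A ∧ ρ y a = distToSet ρ y A) ∧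
    ∀ b, b ∈ A → ρ y b = distToSet ρ y A → ρ a b = 0

/-- The reach of `A` at `a ∈ A`, within the ambient set `S`, for the pseudo-distance `ρ`. -/
def reachAtMod {Y : Type*} (ρ : Y → Y → ℝ≥0∞) (S A : Set Y) (a : Y) : ℝ≥0∞ :=
  sSup {r : ℝ≥0∞ | ∀ y ∈ S, ρ a y < r → HasUniqueProjMod ρ A y}

/-- The global reach of `A` within the ambient set `S`, for the pseudo-distance `ρ`. -/
def globalReachMod {Y : Type*} (ρ : Y → Y → ℝ≥0∞) (S A : Set Y) : ℝ≥0∞ :=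
  ⨅ a ∈ A, reachAtMod ρ S A a

/-- A persistence diagram: a function from a countable index set to
`ℝ²_< = {(a,b) : a < b}`. -/
structure PersistenceDiagram : Type 1 where
  ι : Type
  countable : Countable ι
  pts : ι → ℝ × ℝ
  lt : ∀ i, (pts i).1 < (pts i).2

/-- The `∞`-cost of a partial matching `(I₁, I₂, f)` between two persistence diagrams: the
maximum of the (sup) `ℓ∞`-distances between matched points and of the `ℓ∞`-distances from the
unmatched points to the diagonal (`d_∞(a,Δ) = (a₂ - a₁)/2`).  (On `ℝ × ℝ`, `edist` is the
`ℓ∞`/max distance.) -/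
def costBottleneck (D₁ D₂ : PersistenceDiagram) (I₁ : Set D₁.ι) (I₂ : Set D₂.ι)
    (f : I₁ → I₂) : ℝ≥0∞ :=
  max (⨆ i : I₁, edist (D₁.pts i.1) (D₂.pts (f i).1))
    (max (⨆ i : (I₁ᶜ : Set D₁.ι), ENNReal.ofReal (((D₁.pts i.1).2 - (D₁.pts i.1).1) / 2))
      (⨆ i : (I₂ᶜ : Set D₂.ι), ENNReal.ofReal (((D₂.pts i.1).2 - (D₂.pts i.1).1) / 2)))

/-- The bottleneck distance between two persistence diagrams: the infimum of the `∞`-costs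
over all partial matchings (bijections between subsets of the index sets). -/
def bottleneck (D₁ D₂ : PersistenceDiagram) : ℝ≥0∞ :=
  ⨅ (I₁ : Set D₁.ι) (I₂ : Set D₂.ι) (f : I₁ → I₂) (_ : Function.Bijective f),
    costBottleneck D₁ D₂ I₁ I₂ f

/-- The empty persistence diagram. -/
def emptyDiagram : PersistenceDiagram :=
  ⟨Empty, inferInstance, fun i => i.elim, fun i => i.elim⟩

/-- The space `Dgm_∞` of persistence diagrams at finite bottleneck distance from the empty
diagram (on which `bottleneck` is a distance after identifying diagrams at distance `0`). -/
def DgmInfty : Set PersistenceDiagram :=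
  {D | bottleneck D emptyDiagram ≠ ⊤}

/-- The Bubenik–Wagner embedding of a separable bounded metric space into `Dgm_∞`:
`x ↦ {(2c(k-1), 2ck + d(x, x_k))}_{k≥1}` for a dense sequence `(x_k)` and `c > diam X`
(indexed here by `k : ℕ` as `(2ck, 2c(k+1) + d(x, x_k))`). -/
def bwEmbed {X : Type*} [MetricSpace X] (c : ℝ) (hc : 0 < c) (xs : ℕ → X) (x : X) :
    PersistenceDiagram where
  ι := ℕ
  countable := inferInstance
  pts := fun k => (2 * c * k, 2 * c * (k + 1) + dist x (xs k))
  lt := fun k => by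
    have h : (0:ℝ) ≤ dist x (xs k) := dist_nonneg
    dsimp only
    nlinarith

/-- The midpoint diagram `P = {(2c(k-1), 2ck + (d(x,x_k) + d(y,x_k))/2)}_{k≥1}` associated to
a pair of points `x, y`. -/
def bwMid {X : Type*} [MetricSpace X] (c : ℝ) (hc : 0 < c) (xs : ℕ → X) (x y : X) :
    PersistenceDiagram where
  ι := ℕ
  countable := inferInstance
  pts := fun k => (2 * c * k, 2 * c * (k + 1) + (dist x (xs k) + dist y (xs k)) / 2)
  lt := fun k => by
    have h : (0:ℝ) ≤ dist x (xs k) := dist_nonneg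
    have h' : (0:ℝ) ≤ dist y (xs k) := dist_nonneg
    dsimp only
    nlinarith

-- auxiliary diagram
def mkD (c : ℝ) (hc : 0 < c) (u : ℕ → ℝ) (hu : ∀ k, 0 ≤ u k) : PersistenceDiagram where
  ι := ℕ
  countable := inferInstance
  pts := fun k => (2 * c * k, 2 * c * (k + 1) + u k)
  lt := fun k => by
    try dsimp only
    nlinarith [hu k]

lemma bwEmbed_eq {X : Type*} [MetricSpace X] (c : ℝ) (hc : 0 < c) (xs : ℕ → X) (x : X) :
    bwEmbed c hc xs x = mkD c hc (fun k => dist x (xs k)) (fun k => dist_nonneg) := rfl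

lemma bwMid_eq {X : Type*} [MetricSpace X] (c : ℝ) (hc : 0 < c) (xs : ℕ → X) (x y : X) :
    bwMid c hc xs x y = mkD c hc (fun k => (dist x (xs k) + dist y (xs k)) / 2)
      (fun k => by positivity) := rfl

lemma edist_mkD_pts (c : ℝ) (hc : 0 < c) (u v : ℕ → ℝ) (hu : ∀ k, 0 ≤ u k)
    (hv : ∀ k, 0 ≤ v k) (k : ℕ) :
    edist ((mkD c hc u hu).pts k) ((mkD c hc v hv).pts k) = ENNReal.ofReal |u k - v k| := by
  rw [Prod.edist_eq]
  simp only [mkD, edist_dist, Real.dist_eq]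
  have h1 : (2 * c * (k:ℝ)) - 2 * c * (k:ℝ) = 0 := by ring
  have h2 : (2 * c * ((k:ℝ) + 1) + u k) - (2 * c * ((k:ℝ)+1) + v k) = u k - v k := by ring
  rw [h1, h2]
  simp

lemma bottleneck_mkD_le (c : ℝ) (hc : 0 < c) (u v : ℕ → ℝ) (hu : ∀ k, 0 ≤ u k)
    (hv : ∀ k, 0 ≤ v k) :
    bottleneck (mkD c hc u hu) (mkD c hc v hv) ≤ ⨆ k, ENNReal.ofReal |u k - v k| := by
  have hbij : Function.Bijective (fun i : (Set.univ : Set ℕ) => (⟨i.1, Set.mem_univ _⟩ :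
      (Set.univ : Set ℕ))) := by
    constructor
    · intro a b h
      exact Subtype.ext (congrArg Subtype.val h)
    · intro b
      exact ⟨⟨b.1, Set.mem_univ _⟩, rfl⟩
  refine le_trans (iInf_le_of_le Set.univ (iInf_le_of_le Set.univ (iInf_le_of_le _
    (iInf_le _ hbij)))) ?_
  unfold costBottleneck
  have hempty : ((Set.univ : Set ℕ)ᶜ : Set ℕ) = ∅ := Set.compl_univ
  have h2 : (⨆ i : (((Set.univ : Set ℕ))ᶜ : Set ℕ),
      ENNReal.ofReal ((((mkD c hc u hu).pts i.1).2 - ((mkD c hc u hu).pts i.1).1) / 2)) = 0 := by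
    rw [hempty]
    exact iSup_of_empty _
  have h3 : (⨆ i : (((Set.univ : Set ℕ))ᶜ : Set ℕ),
      ENNReal.ofReal ((((mkD c hc v hv).pts i.1).2 - ((mkD c hc v hv).pts i.1).1) / 2)) = 0 := by
    rw [hempty]
    exact iSup_of_empty _
  erw [h2, h3]
  simp only [max_self]
  refine max_le ?_ (zero_le)
  refine iSup_le fun i => ?_
  rw [edist_mkD_pts c hc u v hu hv i.1]
  exact le_iSup (fun k => ENNReal.ofReal |u k - v k|) i.1

lemma bottleneck_mkD_ge (c : ℝ) (hc : 0 < c) (u v : ℕ → ℝ) (hu : ∀ k, 0 ≤ u k)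
    (hv : ∀ k, 0 ≤ v k) (L : ℝ≥0∞) (hL1 : L ≤ ENNReal.ofReal c)
    (hL2 : L ≤ ⨆ k, ENNReal.ofReal |u k - v k|) :
    L ≤ bottleneck (mkD c hc u hu) (mkD c hc v hv) := by
  refine le_iInf fun I₁ => le_iInf fun I₂ => le_iInf fun f => le_iInf fun hf => ?_
  rw [costBottleneck]
  -- helper: diagonal distances are ≥ c
  have hdiagu : ∀ k : ℕ, ENNReal.ofReal c ≤
      ENNReal.ofReal ((((mkD c hc u hu).pts k).2 - ((mkD c hc u hu).pts k).1) / 2) := by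
    intro k
    apply ENNReal.ofReal_le_ofReal
    have := hu k
    simp only [mkD]
    nlinarith
  have hdiagv : ∀ k : ℕ, ENNReal.ofReal c ≤
      ENNReal.ofReal ((((mkD c hc v hv).pts k).2 - ((mkD c hc v hv).pts k).1) / 2) := by
    intro k
    apply ENNReal.ofReal_le_ofReal
    have := hv k
    simp only [mkD]
    nlinarith
  by_cases h1 : I₁ = Set.univ
  · by_cases h2 : I₂ = Set.univ
    · by_cases h3 : ∀ i : I₁, (f i).1 = i.1
      · -- identity matching
        refine le_trans hL2 (le_trans (iSup_le fun k => ?_) (le_max_left _ _))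
        have hk : k ∈ I₁ := h1 ▸ Set.mem_univ k
        refine le_iSup_of_le (⟨k, hk⟩ : I₁) ?_
        rw [h3 ⟨k, hk⟩]
        rw [edist_mkD_pts c hc u v hu hv k]
      · -- some point moved to a different column
        obtain ⟨i, hi⟩ := not_forall.mp h3
        refine le_trans (hL1.trans ?_) (le_max_left _ _)
        refine le_iSup_of_le i ?_
        rw [Prod.edist_eq]
        refine le_trans ?_ (le_max_left _ _)
        rw [edist_dist, Real.dist_eq]
        apply ENNReal.ofReal_le_ofReal
        have key : ∀ n m : ℕ, n ≠ m →
            c ≤ |((mkD c hc u hu).pts n).1 - ((mkD c hc v hv).pts m).1| := by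
          intro n m hne
          have hnm : (n:ℤ) ≠ (m:ℤ) := by exact_mod_cast hne
          have habs : (1:ℤ) ≤ |(n:ℤ) - (m:ℤ)| := Int.one_le_abs (sub_ne_zero.mpr hnm)
          have habsR : (1:ℝ) ≤ |(n:ℝ) - (m:ℝ)| := by exact_mod_cast habs
          simp only [mkD]
          have heq : 2 * c * (n:ℝ) - 2 * c * (m:ℝ) = 2 * c * ((n:ℝ) - (m:ℝ)) := by ring
          rw [heq, abs_mul, abs_of_pos (by linarith : (0:ℝ) < 2 * c)]
          nlinarith
        exact key i.1 (f i).1 (fun h => hi h.symm)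
    · obtain ⟨k, hk⟩ : ∃ k, k ∉ I₂ := by
        by_contra h
        push_neg at h
        exact h2 (Set.eq_univ_iff_forall.mpr h)
      refine le_trans (hL1.trans ?_) (le_trans (le_max_right _ _) (le_max_right _ _))
      exact le_iSup_of_le (⟨k, hk⟩ : (I₂ᶜ : Set ℕ)) (hdiagv k)
  · obtain ⟨k, hk⟩ : ∃ k, k ∉ I₁ := by
      by_contra h
      push_neg at h
      exact h1 (Set.eq_univ_iff_forall.mpr h)
    refine le_trans (hL1.trans ?_) (le_trans (le_max_left _ _) (le_max_right _ _))
    exact le_iSup_of_le (⟨k, hk⟩ : (I₁ᶜ : Set ℕ)) (hdiagu k)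

lemma sup_lb {X : Type*} [MetricSpace X] (xs : ℕ → X) (hdense : DenseRange xs)
    (α β : X → ℝ) (hα : ∀ a b, α a ≤ α b + dist a b) (hβ : ∀ a b, β a ≤ β b + dist a b)
    (p : X) :
    ENNReal.ofReal (α p - β p) ≤ ⨆ k, ENNReal.ofReal |α (xs k) - β (xs k)| := by
  set S := ⨆ k, ENNReal.ofReal |α (xs k) - β (xs k)| with hS
  apply ENNReal.le_of_forall_pos_le_add
  intro ε hε _
  obtain ⟨k, hk⟩ := hdense.exists_dist_lt p (by positivity : (0:ℝ) < (ε:ℝ) / 2)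
  have h1 : α p ≤ α (xs k) + dist p (xs k) := hα p (xs k)
  have h2 : β (xs k) ≤ β p + dist (xs k) p := hβ (xs k) p
  have hd : dist (xs k) p = dist p (xs k) := dist_comm _ _
  have h3 : α p - β p ≤ |α (xs k) - β (xs k)| + (ε:ℝ) := by
    have h4 : α (xs k) - β (xs k) ≤ |α (xs k) - β (xs k)| := le_abs_self _
    rw [hd] at h2
    linarith
  calc ENNReal.ofReal (α p - β p) ≤ ENNReal.ofReal (|α (xs k) - β (xs k)| + (ε:ℝ)) :=
        ENNReal.ofReal_le_ofReal h3
    _ ≤ ENNReal.ofReal |α (xs k) - β (xs k)| + ENNReal.ofReal (ε:ℝ) :=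
        ENNReal.ofReal_add_le
    _ ≤ S + ε := by
        refine add_le_add (le_iSup (fun k => ENNReal.ofReal |α (xs k) - β (xs k)|) k) ?_
        rw [ENNReal.ofReal_coe_nnreal]

lemma mkD_mem_DgmInfty (c : ℝ) (hc : 0 < c) (u : ℕ → ℝ) (hu : ∀ k, 0 ≤ u k)
    (M : ℝ) (hM : ∀ k, u k ≤ M) :
    mkD c hc u hu ∈ DgmInfty := by
  have hbij : Function.Bijective (fun i : ((∅ : Set ℕ) : Set ((mkD c hc u hu).ι)) =>
      (absurd i.2 (Set.notMem_empty i.1) : ((∅ : Set Empty) : Set emptyDiagram.ι))) := by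
    constructor
    · intro a
      exact absurd a.2 (Set.notMem_empty a.1)
    · intro b
      exact absurd b.2 (Set.notMem_empty b.1)
  have hle : bottleneck (mkD c hc u hu) emptyDiagram ≤ ENNReal.ofReal ((2 * c + M) / 2) := by
    refine le_trans (iInf_le_of_le ∅ (iInf_le_of_le ∅ (iInf_le_of_le _ (iInf_le _ hbij)))) ?_
    unfold costBottleneck
    have e1 : (⨆ i : ((∅ : Set ℕ) : Set ((mkD c hc u hu).ι)),
        edist ((mkD c hc u hu).pts i.1) (emptyDiagram.pts (absurd i.2 (Set.notMem_empty i.1) :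
          ((∅ : Set Empty) : Set emptyDiagram.ι)).1)) = 0 := iSup_of_empty _
    have e3 : (⨆ i : (((∅ : Set Empty))ᶜ : Set emptyDiagram.ι),
        ENNReal.ofReal (((emptyDiagram.pts i.1).2 - (emptyDiagram.pts i.1).1) / 2)) = 0 := by
      haveI : IsEmpty (((∅ : Set Empty))ᶜ : Set emptyDiagram.ι) := by
        constructor; intro a; exact a.1.elim
      exact iSup_of_empty _
    refine max_le (le_trans (le_of_eq e1) (zero_le)) (max_le ?_
      (le_trans (le_of_eq e3) (zero_le)))
    refine iSup_le fun i => ?_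
    apply ENNReal.ofReal_le_ofReal
    have key : ∀ k : ℕ,
        (((mkD c hc u hu).pts k).2 - ((mkD c hc u hu).pts k).1) / 2 ≤ (2 * c + M) / 2 := by
      intro k
      have h1 := hu k
      have h2 := hM k
      simp only [mkD]
      have e : 2 * c * ((k:ℝ) + 1) + u k - 2 * c * (k:ℝ) = 2 * c + u k := by ring
      rw [e]
      linarith
    exact key i.1
  exact ne_top_of_le_ne_top ENNReal.ofReal_ne_top hle

section BW

variable {X : Type*} [MetricSpace X] (hbdd : Bornology.IsBounded (Set.univ : Set X))
  (xs : ℕ → X) (hdense : DenseRange xs) (c : ℝ)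
  (hc : Metric.diam (Set.univ : Set X) < c) (hc0 : 0 < c)

include hbdd hdense hc

lemma dist_le_c (a b : X) : dist a b ≤ c :=
  le_of_lt (lt_of_le_of_lt (Metric.dist_le_diam_of_mem hbdd (Set.mem_univ a)
    (Set.mem_univ b)) hc)

/-- Lower bound: `w_∞(φ z, P_{x,y}) ≥ d(x,y)/2`. -/
lemma bw_lb (x y z : X) :
    ENNReal.ofReal (dist x y / 2) ≤ bottleneck (bwEmbed c hc0 xs z) (bwMid c hc0 xs x y) := by
  rw [bwEmbed_eq, bwMid_eq]
  refine bottleneck_mkD_ge c hc0 _ _ _ _ _ ?_ ?_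
  · apply ENNReal.ofReal_le_ofReal
    have h1 := dist_le_c hbdd xs hdense c hc x y
    have h2 : (0:ℝ) ≤ dist x y := dist_nonneg
    linarith
  · have hsup := sup_lb xs hdense (fun w => (dist x w + dist y w) / 2) (fun w => dist z w)
      (fun a b => by
        have t1 := dist_triangle x b a
        have t2 := dist_triangle y b a
        have t3 := dist_comm a b
        try dsimp only
        linarith)
      (fun a b => by
        have t1 := dist_triangle z b a
        have t3 := dist_comm a b
        try dsimp only
        linarith) z
    have h0 : dist z z = 0 := dist_self z
    refine le_trans ?_ (le_trans hsup (le_of_eq (iSup_congr fun k => by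
      rw [abs_sub_comm])))
    apply ENNReal.ofReal_le_ofReal
    have t := dist_triangle x z y
    have t2 := dist_comm z y
    try dsimp only
    rw [h0]
    linarith

/-- Same with the arguments of `bottleneck` swapped. -/
lemma bw_lb' (x y z : X) :
    ENNReal.ofReal (dist x y / 2) ≤ bottleneck (bwMid c hc0 xs x y) (bwEmbed c hc0 xs z) := by
  rw [bwEmbed_eq, bwMid_eq]
  refine bottleneck_mkD_ge c hc0 _ _ _ _ _ ?_ ?_
  · apply ENNReal.ofReal_le_ofReal
    have h1 := dist_le_c hbdd xs hdense c hc x y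
    have h2 : (0:ℝ) ≤ dist x y := dist_nonneg
    linarith
  · have hsup := sup_lb xs hdense (fun w => (dist x w + dist y w) / 2) (fun w => dist z w)
      (fun a b => by
        have t1 := dist_triangle x b a
        have t2 := dist_triangle y b a
        have t3 := dist_comm a b
        try dsimp only
        linarith)
      (fun a b => by
        have t1 := dist_triangle z b a
        have t3 := dist_comm a b
        try dsimp only
        linarith) z
    have h0 : dist z z = 0 := dist_self z
    refine le_trans ?_ hsup
    apply ENNReal.ofReal_le_ofReal
    have t := dist_triangle x z y
    have t2 := dist_comm z y
    try dsimp only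
    rw [h0]
    linarith

/-- Upper bound at the endpoints, giving the equality. -/
lemma bw_eq_x (x y : X) :
    bottleneck (bwEmbed c hc0 xs x) (bwMid c hc0 xs x y) = ENNReal.ofReal (dist x y / 2) := by
  refine le_antisymm ?_ (bw_lb hbdd xs hdense c hc hc0 x y x)
  rw [bwEmbed_eq, bwMid_eq]
  refine le_trans (bottleneck_mkD_le c hc0 _ _ _ _) (iSup_le fun k => ?_)
  apply ENNReal.ofReal_le_ofReal
  have e : dist x (xs k) - (dist x (xs k) + dist y (xs k)) / 2
      = (dist x (xs k) - dist y (xs k)) / 2 := by ring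
  rw [e, abs_div, abs_two]
  have := abs_dist_sub_le x y (xs k)
  linarith

lemma bw_eq_y (x y : X) :
    bottleneck (bwEmbed c hc0 xs y) (bwMid c hc0 xs x y) = ENNReal.ofReal (dist x y / 2) := by
  refine le_antisymm ?_ (bw_lb hbdd xs hdense c hc hc0 x y y)
  rw [bwEmbed_eq, bwMid_eq]
  refine le_trans (bottleneck_mkD_le c hc0 _ _ _ _) (iSup_le fun k => ?_)
  apply ENNReal.ofReal_le_ofReal
  have e : dist y (xs k) - (dist x (xs k) + dist y (xs k)) / 2
      = (dist y (xs k) - dist x (xs k)) / 2 := by ring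
  rw [e, abs_div, abs_two]
  have h1 := abs_dist_sub_le y x (xs k)
  have h2 := dist_comm y x
  linarith

lemma bw_eq_x' (x y : X) :
    bottleneck (bwMid c hc0 xs x y) (bwEmbed c hc0 xs x) = ENNReal.ofReal (dist x y / 2) := by
  refine le_antisymm ?_ (bw_lb' hbdd xs hdense c hc hc0 x y x)
  rw [bwEmbed_eq, bwMid_eq]
  refine le_trans (bottleneck_mkD_le c hc0 _ _ _ _) (iSup_le fun k => ?_)
  apply ENNReal.ofReal_le_ofReal
  have e : (dist x (xs k) + dist y (xs k)) / 2 - dist x (xs k)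
      = (dist y (xs k) - dist x (xs k)) / 2 := by ring
  rw [e, abs_div, abs_two]
  have h1 := abs_dist_sub_le y x (xs k)
  have h2 := dist_comm y x
  linarith

lemma bw_eq_y' (x y : X) :
    bottleneck (bwMid c hc0 xs x y) (bwEmbed c hc0 xs y) = ENNReal.ofReal (dist x y / 2) := by
  refine le_antisymm ?_ (bw_lb' hbdd xs hdense c hc hc0 x y y)
  rw [bwEmbed_eq, bwMid_eq]
  refine le_trans (bottleneck_mkD_le c hc0 _ _ _ _) (iSup_le fun k => ?_)
  apply ENNReal.ofReal_le_ofReal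
  have e : (dist x (xs k) + dist y (xs k)) / 2 - dist y (xs k)
      = (dist x (xs k) - dist y (xs k)) / 2 := by ring
  rw [e, abs_div, abs_two]
  have := abs_dist_sub_le x y (xs k)
  linarith

/-- Separation: embedded points of distinct points are at positive bottleneck distance. -/
lemma bw_sep (w z : X) :
    ENNReal.ofReal (min c (dist w z)) ≤ bottleneck (bwEmbed c hc0 xs w) (bwEmbed c hc0 xs z) := by
  rw [bwEmbed_eq, bwEmbed_eq]
  refine bottleneck_mkD_ge c hc0 _ _ _ _ _ ?_ ?_
  · exact ENNReal.ofReal_le_ofReal (min_le_left _ _)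
  · have hsup := sup_lb xs hdense (fun a => dist w a) (fun a => dist z a)
      (fun a b => by
        have t1 := dist_triangle w b a
        have t3 := dist_comm a b
        try dsimp only
        linarith)
      (fun a b => by
        have t1 := dist_triangle z b a
        have t3 := dist_comm a b
        try dsimp only
        linarith) z
    refine le_trans ?_ hsup
    apply ENNReal.ofReal_le_ofReal
    have h0 : dist z z = 0 := dist_self z
    try dsimp only
    rw [h0]
    have := min_le_right c (dist w z)
    linarith

lemma bwMid_mem (x y : X) : bwMid c hc0 xs x y ∈ DgmInfty := by
  rw [bwMid_eq]
  refine mkD_mem_DgmInfty c hc0 _ _ (Metric.diam (Set.univ : Set X)) fun k => ?_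
  have h1 := Metric.dist_le_diam_of_mem hbdd (Set.mem_univ x) (Set.mem_univ (xs k))
  have h2 := Metric.dist_le_diam_of_mem hbdd (Set.mem_univ y) (Set.mem_univ (xs k))
  have h3 : (0:ℝ) ≤ Metric.diam (Set.univ : Set X) := Metric.diam_nonneg
  linarith

end BW

/-- Let `X` be a separable bounded metric space, `(x_k)` a dense sequence,
`c > diam X`, and `φ = bwEmbed` the Bubenik–Wagner isometric embedding of `X` into
`(Dgm_∞, w_∞)`.  If `x` is an accumulation point of `X` then the reach of `φ(X)` at `φ(x)`
is zero; in particular if `X` is not discrete the global reach of `φ(X)` in `Dgm_∞` is zero.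
Moreover, for any `x' ≠ y'` the diagram `P = bwMid c x' y'` satisfies
`w_∞(φ(x'), P) = w_∞(φ(y'), P) = d(x',y')/2` and `w_∞(φ(z), P) ≥ d(x',y')/2` for all `z`,
so `P` has at least two nearest points in `φ(X)`. -/
theorem reach_zero_in_persistence_diagrams {X : Type*} [MetricSpace X]
    (hbdd : Bornology.IsBounded (Set.univ : Set X))
    (xs : ℕ → X) (hdense : DenseRange xs)
    (c : ℝ) (hc : Metric.diam (Set.univ : Set X) < c) (hc0 : 0 < c)
    (x : X) (hx : ∀ ε : ℝ, 0 < ε → ∃ y : X, y ≠ x ∧ dist x y < ε) :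
    reachAtMod bottleneck DgmInfty (Set.range (bwEmbed c hc0 xs))
        (bwEmbed c hc0 xs x) = 0 ∧
    globalReachMod bottleneck DgmInfty (Set.range (bwEmbed c hc0 xs)) = 0 ∧
    ∀ x' y' : X, x' ≠ y' →
      bottleneck (bwEmbed c hc0 xs x') (bwMid c hc0 xs x' y')
          = ENNReal.ofReal (dist x' y' / 2) ∧
      bottleneck (bwEmbed c hc0 xs y') (bwMid c hc0 xs x' y')
          = ENNReal.ofReal (dist x' y' / 2) ∧
      ∀ z : X, ENNReal.ofReal (dist x' y' / 2)
          ≤ bottleneck (bwEmbed c hc0 xs z) (bwMid c hc0 xs x' y') := by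
  have hpart1 : reachAtMod bottleneck DgmInfty (Set.range (bwEmbed c hc0 xs))
      (bwEmbed c hc0 xs x) = 0 := by
    rw [reachAtMod]
    refine le_antisymm (sSup_le fun r hr => ?_) (zero_le)
    by_contra hcon
    have hrpos : 0 < r := pos_iff_ne_zero.mpr fun h => hcon (h ▸ le_rfl)
    obtain ⟨ε, hε0, hεr⟩ : ∃ ε : ℝ, 0 < ε ∧ ENNReal.ofReal ε < r := by
      rcases eq_or_ne r ⊤ with h | h
      · exact ⟨1, one_pos, h ▸ ENNReal.ofReal_lt_top⟩
      · have htr : 0 < r.toReal := ENNReal.toReal_pos hrpos.ne' h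
        refine ⟨r.toReal / 2, by positivity, ?_⟩
        rw [ENNReal.ofReal_lt_iff_lt_toReal (by positivity) h]
        linarith
    obtain ⟨y', hy'x, hdxy⟩ := hx ε hε0
    have hmem := bwMid_mem hbdd xs hdense c hc hc0 x y'
    have hlt : bottleneck (bwEmbed c hc0 xs x) (bwMid c hc0 xs x y') < r := by
      rw [bw_eq_x hbdd xs hdense c hc hc0 x y']
      refine lt_of_le_of_lt (ENNReal.ofReal_le_ofReal ?_) hεr
      have := dist_nonneg (x := x) (y := y')
      linarith
    obtain ⟨a, ⟨haA, hadist⟩, huniq⟩ := hr (bwMid c hc0 xs x y') hmem hlt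
    obtain ⟨w, rfl⟩ := haA
    have hdts : distToSet bottleneck (bwMid c hc0 xs x y') (Set.range (bwEmbed c hc0 xs))
        = ENNReal.ofReal (dist x y' / 2) := by
      refine le_antisymm ?_ ?_
      · rw [distToSet]
        refine le_trans (iInf₂_le (bwEmbed c hc0 xs x) ⟨x, rfl⟩) ?_
        rw [bw_eq_x' hbdd xs hdense c hc hc0 x y']
      · rw [distToSet]
        refine le_iInf fun b => le_iInf fun hb => ?_
        obtain ⟨z, rfl⟩ := hb
        exact bw_lb' hbdd xs hdense c hc hc0 x y' z
    have h1 : bottleneck (bwEmbed c hc0 xs w) (bwEmbed c hc0 xs x) = 0 :=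
      huniq _ ⟨x, rfl⟩ (by rw [hdts]; exact bw_eq_x' hbdd xs hdense c hc hc0 x y')
    have h2 : bottleneck (bwEmbed c hc0 xs w) (bwEmbed c hc0 xs y') = 0 :=
      huniq _ ⟨y', rfl⟩ (by rw [hdts]; exact bw_eq_y' hbdd xs hdense c hc hc0 x y')
    have hkey : ∀ z : X, bottleneck (bwEmbed c hc0 xs w) (bwEmbed c hc0 xs z) = 0 → w = z := by
      intro z hz
      have hsep := bw_sep hbdd xs hdense c hc hc0 w z
      rw [hz] at hsep
      have hm : min c (dist w z) ≤ 0 :=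
        ENNReal.ofReal_eq_zero.mp (le_antisymm (le_zero_iff.mp hsep ▸ le_rfl) (zero_le))
      rcases min_le_iff.mp hm with h | h
      · linarith
      · exact dist_le_zero.mp h
    exact hy'x ((hkey y' h2).symm.trans (hkey x h1))
  refine ⟨hpart1, ?_, ?_⟩
  · rw [globalReachMod]
    refine le_antisymm ?_ (zero_le)
    refine le_trans (iInf₂_le (bwEmbed c hc0 xs x) ⟨x, rfl⟩) ?_
    rw [hpart1]
  · intro x' y' _
    exact ⟨bw_eq_x hbdd xs hdense c hc hc0 x' y', bw_eq_y hbdd xs hdense c hc hc0 x' y',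
      fun z => bw_lb hbdd xs hdense c hc hc0 x' y' z⟩
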